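/- arXiv:0806.1776 — 2 statements merged into one kernel-verified Lean document; each statement's English description precedes it below -/
import Mathlib

section
/- Two subsets I, J of [m] are non-nesting if and only if the associated lattice paths p(I) and p(J) are non-crossing, i.e., one path lies weakly to the northwest of the other along their entire length. -/
open Finset

/-- Pairs `{u<v}` and `{x<y}` (values in `ℕ ∪ {∞}`) are non-nesting if
neither `x<u<v<y` nor `u<x<y<v`. -/
def PairNonNesting (u v x y : WithTop ℕ) : Prop :=
  ¬ (x < u ∧ u < v ∧ v < y) ∧ ¬ (u < x ∧ x < y ∧ y < v)

/-- Pairs `{u<v}` and `{x<y}` are non-crossing if neither `x<u<y<v` nor `u<x<v<y`. -/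
def PairNonCrossing (u v x y : WithTop ℕ) : Prop :=
  ¬ (x < u ∧ u < y ∧ y < v) ∧ ¬ (u < x ∧ x < v ∧ v < y)

/-- Remove one common entry (equal entries in equal positions) from the two lists. -/
def stripOnce (I J : List ℕ) : Option (List ℕ × List ℕ) :=
  ((List.range (min I.length J.length)).find? (fun s => I.getD s 0 == J.getD s 0)).map
    (fun s => (I.eraseIdx s, J.eraseIdx s))

def stripAux : ℕ → List ℕ → List ℕ → List ℕ × List ℕ
  | 0, I, J => (I, J)
  | n+1, I, J =>
    match stripOnce I J with
    | none => (I, J)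
    | some (I', J') => stripAux n I' J'

/-- Repeatedly remove the "common part" (equal entries in equal positions). -/
def strip (I J : List ℕ) : List ℕ × List ℕ := stripAux I.length I J

/-- The `s`-th entry (0-indexed) of the list, viewed in `ℕ ∪ {∞}`, with `∞` beyond the end. -/
def entry (l : List ℕ) (s : ℕ) : WithTop ℕ :=
  (l.map (fun a => (a : WithTop ℕ))).getD s ⊤

/-- Non-nesting condition on sorted lists `I`, `J` with `I` the shorter one:
after removing the common part, all consecutive-difference pairs are non-nesting
(with the `∞` convention for the shorter list). -/
def ListsNonNesting (I J : List ℕ) : Prop :=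
  ∀ s : ℕ, s + 1 < (strip I J).2.length →
    PairNonNesting (entry (strip I J).1 s) (entry (strip I J).1 (s+1))
      (entry (strip I J).2 s) (entry (strip I J).2 (s+1))

def ListsNonCrossing (I J : List ℕ) : Prop :=
  ∀ s : ℕ, s + 1 < (strip I J).2.length →
    PairNonCrossing (entry (strip I J).1 s) (entry (strip I J).1 (s+1))
      (entry (strip I J).2 s) (entry (strip I J).2 (s+1))

/-- The increasing list of elements of a finite set. -/
def sortedList (I : Finset ℕ) : List ℕ := I.sort (· ≤ ·)

/-- Subsets `I`, `J` are non-nesting. -/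
def SetsNonNesting (I J : Finset ℕ) : Prop :=
  if I.card ≤ J.card then ListsNonNesting (sortedList I) (sortedList J)
  else ListsNonNesting (sortedList J) (sortedList I)

/-- Subsets `I`, `J` are non-crossing. -/
def SetsNonCrossing (I J : Finset ℕ) : Prop :=
  if I.card ≤ J.card then ListsNonCrossing (sortedList I) (sortedList J)
  else ListsNonCrossing (sortedList J) (sortedList I)

/-- `A ≺ B`: every element of `A` is smaller than every element of `B`. -/
def Precedes (A B : Finset ℕ) : Prop := ∀ a ∈ A, ∀ b ∈ B, a < b

/-- Leclerc–Zelevinsky weak separation. -/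
def WeaklySeparated (I J : Finset ℕ) : Prop :=
  (J.card ≤ I.card ∧ ∃ J₁ J₂ : Finset ℕ, Disjoint J₁ J₂ ∧ J \ I = J₁ ∪ J₂ ∧
    Precedes J₁ (I \ J) ∧ Precedes (I \ J) J₂) ∨
  (I.card ≤ J.card ∧ ∃ I₁ I₂ : Finset ℕ, Disjoint I₁ I₂ ∧ I \ J = I₁ ∪ I₂ ∧
    Precedes I₁ (J \ I) ∧ Precedes (J \ I) I₂)

/-- Number of north steps of the path `p(I)` among its first `k` steps. -/
def northCount (I : Finset ℕ) (k : ℕ) : ℕ := (I.filter (fun i => i ≤ k)).card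

/-- Paths `p(I)`, `p(J)` are non-crossing: one lies weakly northwest of the other
along their entire length. -/
def PathsNonCrossing (I J : Finset ℕ) : Prop :=
  (∀ k, northCount J k ≤ northCount I k) ∨ (∀ k, northCount I k ≤ northCount J k)

/-- `[k₁, k₂]` (in step coordinates) is a proper common part of the paths `p(I)`, `p(J)`
of length `m`: a maximal shared connected subpath containing neither the source nor an
endpoint.  Maximality is expressed by the two paths separating just before `k₁` and just
after `k₂`. -/
def ProperCommonPart (m : ℕ) (I J : Finset ℕ) (k₁ k₂ : ℕ) : Prop :=
  1 ≤ k₁ ∧ k₁ ≤ k₂ ∧ k₂ < m ∧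
  (∀ k, k₁ ≤ k → k ≤ k₂ → northCount I k = northCount J k) ∧
  northCount I (k₁ - 1) ≠ northCount J (k₁ - 1) ∧
  northCount I (k₂ + 1) ≠ northCount J (k₂ + 1)

/-- Paths `p(I)`, `p(J)` are non-kissing: at every proper common part each path leaves
in the same direction in which it entered (the common part is a crossing, not a kiss). -/
def PathsNonKissing (m : ℕ) (I J : Finset ℕ) : Prop :=
  ∀ k₁ k₂, ProperCommonPart m I J k₁ k₂ → ((k₁ ∈ I) ↔ (k₂ + 1 ∈ I))

/-- Number of north steps among the first `k` steps, for `k ∈ ℤ` (zero for `k ≤ 0`). -/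
def northCountZ (I : Finset ℕ) (k : ℤ) : ℤ := (northCount I k.toNat : ℤ)

/-- The indicator Gelfand–Tsetlin pattern of the path `p(I)`: the cell
`[x,x+1] × [y,y+1]` gets a `1` if it lies southeast of the path and `0` if northwest. -/
noncomputable def Tpat (I : Finset ℕ) (x y : ℤ) : ℝ :=
  if y + 1 ≤ northCountZ I (x + y + 1) then 1 else 0

/-- `(x,y)` is a node of the partial staircase `L ⊆ L_m` with set of sink heights `A`:
it lies (weakly) southwest of some sink `(m-j, j)`, `j ∈ A`. -/
def NodeL (m : ℕ) (A : Finset ℕ) (x y : ℤ) : Prop :=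
  0 ≤ x ∧ 0 ≤ y ∧ ∃ j ∈ A, x + j ≤ m ∧ y ≤ j

/-- Same, with natural-number coordinates. -/
def InL (m : ℕ) (A : Finset ℕ) (x y : ℕ) : Prop :=
  ∃ j ∈ A, x + j ≤ m ∧ y ≤ j

/-- The path `p(I)` is contained in the partial staircase with sink heights `A`. -/
def PathInL (m : ℕ) (A : Finset ℕ) (I : Finset ℕ) : Prop :=
  ∀ k ≤ m, InL m A (k - northCount I k) (northCount I k)

/-- A critical node has edges of `L` leaving it toward both the north and the east. -/
def CriticalNode (m : ℕ) (A : Finset ℕ) (x y : ℕ) : Prop :=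
  InL m A (x + 1) y ∧ InL m A x (y + 1)

open Classical in
/-- `N(L)`: the number of critical nodes of the partial staircase. -/
noncomputable def numCritical (m : ℕ) (A : Finset ℕ) : ℕ :=
  ((Finset.range (m+1) ×ˢ Finset.range (m+1)).filter
    (fun p => CriticalNode m A p.1 p.2)).card

section AuxLemmas

lemma entry_eq (l : List ℕ) (s : ℕ) :
    entry l s = (l[s]?.map (fun a => WithTop.some a)).getD ⊤ := by
  induction l generalizing s with
  | nil => simp [entry]
  | cons a t ih =>
    cases s with
    | zero => simp [entry]
    | succ s =>
      have h : entry (a :: t) (s + 1) = entry t s := by simp [entry]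
      rw [h, ih]
      simp

lemma entry_eq_of_lt (l : List ℕ) (s : ℕ) (h : s < l.length) :
    entry l s = WithTop.some l[s] := by
  rw [entry_eq, List.getElem?_eq_getElem h]
  rfl

lemma entry_eq_top (l : List ℕ) (s : ℕ) (h : l.length ≤ s) :
    entry l s = ⊤ := by
  rw [entry_eq, List.getElem?_eq_none h]
  rfl

lemma entry_lt_top (l : List ℕ) (s : ℕ) (h : entry l s < ⊤) : s < l.length := by
  by_contra h'
  rw [entry_eq_top l s (by omega)] at h
  exact lt_irrefl _ h

lemma entry_strict (l : List ℕ) (hl : l.Pairwise (· < ·)) {s t : ℕ} (hst : s < t)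
    (ht : t < l.length) : entry l s < entry l t := by
  rw [entry_eq_of_lt l s (lt_trans hst ht), entry_eq_of_lt l t ht]
  have := hl.rel_get_of_lt (a := ⟨s, lt_trans hst ht⟩) (b := ⟨t, ht⟩) hst
  exact WithTop.coe_lt_coe.mpr (by simpa using this)

lemma entry_le_iff (l : List ℕ) (hl : l.Pairwise (· < ·)) (s k : ℕ) :
    entry l s ≤ WithTop.some k ↔ s < l.countP (fun x => x ≤ k) := by
  induction l generalizing s with
  | nil =>
    rw [entry_eq_top [] s (by simp)]
    simp
  | cons a t ih =>
    have ht : t.Pairwise (· < ·) := hl.of_cons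
    have hcs : entry (a :: t) 0 = WithTop.some a := entry_eq_of_lt (a :: t) 0 (by simp)
    by_cases hak : a ≤ k
    · rw [List.countP_cons_of_pos (p := fun x => decide (x ≤ k)) (by simpa using hak)]
      cases s with
      | zero =>
        rw [hcs]
        simp only [Nat.succ_pos, iff_true]
        exact WithTop.coe_le_coe.mpr hak
      | succ s =>
        have he : entry (a :: t) (s + 1) = entry t s := by
          rw [entry_eq, entry_eq]
          simp
        rw [he, ih ht s]
        omega
    · have hc : (a :: t).countP (fun x => x ≤ k) = 0 := by
        rw [List.countP_eq_zero]
        intro x hx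
        rcases List.mem_cons.mp hx with rfl | hx
        · simpa using hak
        · have := List.rel_of_pairwise_cons hl hx
          simp only [decide_eq_true_eq]
          omega
      rw [hc]
      simp only [Nat.not_lt_zero, iff_false]
      intro hle
      have hlt : entry (a :: t) s < ⊤ :=
        lt_of_le_of_lt hle (WithTop.coe_lt_top k)
      have hs := entry_lt_top _ _ hlt
      rw [entry_eq_of_lt _ s hs] at hle
      have hxk : (a :: t)[s] ≤ k := WithTop.coe_le_coe.mp hle
      have hmem : (a :: t)[s] ∈ a :: t := List.getElem_mem hs
      rcases List.mem_cons.mp hmem with hEq | hx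
      · omega
      · have := List.rel_of_pairwise_cons hl hx
        omega

lemma northCount_eq (I : Finset ℕ) (k : ℕ) :
    northCount I k = (sortedList I).countP (fun x => x ≤ k) := by
  classical
  rw [northCount, Finset.card, Finset.filter_val, ← Multiset.countP_eq_card_filter,
      ← Finset.sort_eq I (· ≤ ·), Multiset.coe_countP]
  rfl

lemma counts_le_iff (I J : Finset ℕ) :
    (∀ k, northCount J k ≤ northCount I k) ↔
      ∀ s, entry (sortedList I) s ≤ entry (sortedList J) s := by
  have hI : (sortedList I).Pairwise (· < ·) := List.sortedLT_iff_pairwise.mp (Finset.sortedLT_sort I)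
  have hJ : (sortedList J).Pairwise (· < ·) := List.sortedLT_iff_pairwise.mp (Finset.sortedLT_sort J)
  constructor
  · intro h s
    rcases lt_or_ge s (sortedList J).length with hs | hs
    · have hJs : entry (sortedList J) s = WithTop.some ((sortedList J)[s]) :=
        entry_eq_of_lt _ _ hs
      have h2 := (entry_le_iff _ hJ s _).mp hJs.le
      rw [← northCount_eq] at h2
      have h3 : s < northCount I ((sortedList J)[s]) := lt_of_lt_of_le h2 (h _)
      rw [northCount_eq] at h3
      rw [hJs]
      exact (entry_le_iff _ hI s _).mpr h3
    · rw [entry_eq_top _ _ hs]; exact le_top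
  · intro h k
    rw [northCount_eq, northCount_eq]
    by_contra hc
    push_neg at hc
    have h2 := (entry_le_iff _ hJ ((sortedList I).countP (fun x => x ≤ k)) k).mpr hc
    have h3 := le_trans (h _) h2
    have h4 := (entry_le_iff _ hI _ k).mp h3
    omega

lemma stripOnce_eq_some {A B A' B' : List ℕ} (h : stripOnce A B = some (A', B')) :
    ∃ t, t < A.length ∧ t < B.length ∧ A.getD t 0 = B.getD t 0 ∧
      A' = A.eraseIdx t ∧ B' = B.eraseIdx t := by
  rw [stripOnce] at h
  rcases Option.map_eq_some_iff.mp h with ⟨t, hfind, heq⟩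
  have hmem := List.mem_range.mp (List.mem_of_find?_eq_some hfind)
  have hp := List.find?_some hfind
  refine ⟨t, by omega, by omega, by simpa using hp, ?_, ?_⟩
  · exact (congrArg Prod.fst heq).symm
  · exact (congrArg Prod.snd heq).symm

lemma stripOnce_eq_none {A B : List ℕ} (h : stripOnce A B = none) :
    ∀ s, s < A.length → s < B.length → A.getD s 0 ≠ B.getD s 0 := by
  rw [stripOnce, Option.map_eq_none_iff, List.find?_eq_none] at h
  intro s h1 h2
  have := h s (List.mem_range.mpr (by omega))
  simpa using this

lemma entry_eraseIdx (l : List ℕ) (t s : ℕ) :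
    entry (l.eraseIdx t) s = if s < t then entry l s else entry l (s + 1) := by
  rw [entry_eq, List.getElem?_eraseIdx]
  rcases lt_or_ge s t with h | h
  · rw [if_pos h, if_pos h, entry_eq]
  · rw [if_neg (by omega), if_neg (by omega), entry_eq]

lemma erase_entry_iff {A B : List ℕ} {t : ℕ} (htA : t < A.length) (htB : t < B.length)
    (heq : A.getD t 0 = B.getD t 0) :
    (∀ s, entry A s ≤ entry B s) ↔
      (∀ s, entry (A.eraseIdx t) s ≤ entry (B.eraseIdx t) s) := by
  have hAB : entry A t = entry B t := by
    rw [entry_eq_of_lt _ _ htA, entry_eq_of_lt _ _ htB]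
    rw [List.getD_eq_getElem?_getD, List.getD_eq_getElem?_getD,
        List.getElem?_eq_getElem htA, List.getElem?_eq_getElem htB] at heq
    simp only [Option.getD_some] at heq
    rw [heq]
  constructor
  · intro h s
    rw [entry_eraseIdx, entry_eraseIdx]
    split
    · exact h s
    · exact h (s + 1)
  · intro h s
    rcases lt_trichotomy s t with hst | rfl | hst
    · have := h s
      rw [entry_eraseIdx, entry_eraseIdx, if_pos hst, if_pos hst] at this
      exact this
    · exact hAB.le
    · obtain ⟨u, rfl⟩ : ∃ u, s = u + 1 := ⟨s - 1, by omega⟩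
      have := h u
      rw [entry_eraseIdx, entry_eraseIdx, if_neg (by omega), if_neg (by omega)] at this
      exact this

lemma stripAux_spec (n : ℕ) : ∀ A B : List ℕ,
    ((∀ s, entry A s ≤ entry B s) ↔
      (∀ s, entry (stripAux n A B).1 s ≤ entry (stripAux n A B).2 s)) ∧
    ((∀ s, entry B s ≤ entry A s) ↔
      (∀ s, entry (stripAux n A B).2 s ≤ entry (stripAux n A B).1 s)) ∧
    (A.Pairwise (· < ·) → (stripAux n A B).1.Pairwise (· < ·)) ∧
    (B.Pairwise (· < ·) → (stripAux n A B).2.Pairwise (· < ·)) ∧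
    (A.length ≤ B.length → (stripAux n A B).1.length ≤ (stripAux n A B).2.length) ∧
    (A.length ≤ n → stripOnce (stripAux n A B).1 (stripAux n A B).2 = none) := by
  induction n with
  | zero =>
    intro A B
    refine ⟨Iff.rfl, Iff.rfl, id, id, id, ?_⟩
    intro h
    have hA : A = [] := List.length_eq_zero_iff.mp (by omega)
    subst hA
    simp [stripAux, stripOnce]
  | succ n ih =>
    intro A B
    cases hso : stripOnce A B with
    | none =>
      have hred : stripAux (n + 1) A B = (A, B) := by simp only [stripAux, hso]
      rw [hred]
      exact ⟨Iff.rfl, Iff.rfl, id, id, id, fun _ => hso⟩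
    | some AB =>
      obtain ⟨A', B'⟩ := AB
      obtain ⟨t, htA, htB, heq, rfl, rfl⟩ := stripOnce_eq_some hso
      have hred : stripAux (n + 1) A B = stripAux n (A.eraseIdx t) (B.eraseIdx t) := by
        simp only [stripAux, hso]
      rw [hred]
      obtain ⟨ih1, ih2, ih3, ih4, ih5, ih6⟩ := ih (A.eraseIdx t) (B.eraseIdx t)
      refine ⟨(erase_entry_iff htA htB heq).trans ih1,
        (erase_entry_iff htB htA heq.symm).trans ih2,
        fun h => ih3 (h.sublist (List.eraseIdx_sublist _ _)),
        fun h => ih4 (h.sublist (List.eraseIdx_sublist _ _)),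
        fun h => ih5 ?_, fun h => ih6 ?_⟩
      · rw [List.length_eraseIdx_of_lt htA, List.length_eraseIdx_of_lt htB]
        omega
      · rw [List.length_eraseIdx_of_lt htA]
        omega

lemma nonNesting_core (A B : List ℕ) (hA : A.Pairwise (· < ·)) (hB : B.Pairwise (· < ·))
    (hlen : A.length ≤ B.length)
    (hne : ∀ s, s < A.length → s < B.length → A.getD s 0 ≠ B.getD s 0) :
    (∀ s, s + 1 < B.length →
      PairNonNesting (entry A s) (entry A (s + 1)) (entry B s) (entry B (s + 1))) ↔
    ((∀ s, entry A s ≤ entry B s) ∨ (∀ s, entry B s ≤ entry A s)) := by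
  have hne' : ∀ s, s < B.length → entry A s ≠ entry B s := by
    intro s hsB
    rcases lt_or_ge s A.length with hsA | hsA
    · rw [entry_eq_of_lt _ _ hsA, entry_eq_of_lt _ _ hsB]
      have h0 := hne s hsA hsB
      rw [List.getD_eq_getElem?_getD, List.getD_eq_getElem?_getD,
          List.getElem?_eq_getElem hsA, List.getElem?_eq_getElem hsB] at h0
      simp only [Option.getD_some] at h0
      intro hc
      exact h0 (WithTop.coe_inj.mp hc)
    · rw [entry_eq_top _ _ hsA, entry_eq_of_lt _ _ hsB]
      intro hc
      exact WithTop.coe_ne_top hc.symm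
  constructor
  · intro H
    rcases Nat.eq_zero_or_pos B.length with hB0 | hB0
    · left
      intro s
      rw [entry_eq_top B s (by omega)]
      exact le_top
    · have key : ∀ s, s < B.length →
          ((entry A s < entry B s ∧ entry A 0 < entry B 0) ∨
           (entry B s < entry A s ∧ entry B 0 < entry A 0)) := by
        intro s
        induction s with
        | zero =>
          intro h0
          rcases (hne' 0 h0).lt_or_gt with h | h
          · exact Or.inl ⟨h, h⟩
          · exact Or.inr ⟨h, h⟩
        | succ s ih =>
          intro hs1
          have hs : s < B.length := by omega
          have hnn := H s hs1
          rcases ih hs with ⟨h1, h0⟩ | ⟨h1, h0⟩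
          · refine Or.inl ⟨?_, h0⟩
            rcases (hne' (s + 1) hs1).lt_or_gt with h | h
            · exact h
            · exfalso
              have hBB : entry B s < entry B (s + 1) :=
                entry_strict B hB (Nat.lt_succ_self s) hs1
              exact hnn.2 ⟨h1, hBB, h⟩
          · refine Or.inr ⟨?_, h0⟩
            rcases (hne' (s + 1) hs1).lt_or_gt with h | h
            · exfalso
              have hA1 : s + 1 < A.length := by
                by_contra hc
                rw [entry_eq_top A (s + 1) (by omega)] at h
                exact not_top_lt h
              have hAA : entry A s < entry A (s + 1) :=
                entry_strict A hA (Nat.lt_succ_self s) hA1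
              exact hnn.1 ⟨h1, hAA, h⟩
            · exact h
      rcases (hne' 0 hB0).lt_or_gt with h0 | h0
      · left
        intro s
        rcases lt_or_ge s B.length with hs | hs
        · rcases key s hs with ⟨h, _⟩ | ⟨_, h⟩
          · exact h.le
          · exact absurd h0 (not_lt_of_gt h)
        · rw [entry_eq_top B s hs]
          exact le_top
      · right
        intro s
        rcases lt_or_ge s B.length with hs | hs
        · rcases key s hs with ⟨_, h⟩ | ⟨h, _⟩
          · exact absurd h (not_lt_of_gt h0)
          · exact h.le
        · rw [entry_eq_top A s (by omega)]
          exact le_top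
  · rintro (h | h) s hs1
    · exact ⟨fun ⟨c1, _, _⟩ => (h s).not_gt c1, fun ⟨_, _, c3⟩ => (h (s + 1)).not_gt c3⟩
    · exact ⟨fun ⟨_, _, c3⟩ => (h (s + 1)).not_gt c3, fun ⟨c1, _, _⟩ => (h s).not_gt c1⟩

lemma main_half (I J : Finset ℕ) (hc : I.card ≤ J.card) :
    ListsNonNesting (sortedList I) (sortedList J) ↔ PathsNonCrossing I J := by
  obtain ⟨e1, e2, s1, s2, l1, l2⟩ :=
    stripAux_spec (sortedList I).length (sortedList I) (sortedList J)
  have hlen : (sortedList I).length ≤ (sortedList J).length := by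
    rw [sortedList, sortedList, Finset.length_sort, Finset.length_sort]
    exact hc
  have hstrip : strip (sortedList I) (sortedList J) =
      stripAux (sortedList I).length (sortedList I) (sortedList J) := rfl
  have hA : (strip (sortedList I) (sortedList J)).1.Pairwise (· < ·) := by
    rw [hstrip]; exact s1 (List.sortedLT_iff_pairwise.mp (Finset.sortedLT_sort I))
  have hB : (strip (sortedList I) (sortedList J)).2.Pairwise (· < ·) := by
    rw [hstrip]; exact s2 (List.sortedLT_iff_pairwise.mp (Finset.sortedLT_sort J))
  have hlen' : (strip (sortedList I) (sortedList J)).1.length ≤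
      (strip (sortedList I) (sortedList J)).2.length := by
    rw [hstrip]; exact l1 hlen
  have hnone : stripOnce (strip (sortedList I) (sortedList J)).1
      (strip (sortedList I) (sortedList J)).2 = none := by
    rw [hstrip]; exact l2 le_rfl
  have core := nonNesting_core _ _ hA hB hlen' (stripOnce_eq_none hnone)
  rw [ListsNonNesting]
  rw [core]
  rw [PathsNonCrossing, counts_le_iff I J, counts_le_iff J I]
  rw [hstrip]
  exact or_congr e1.symm e2.symm

end AuxLemmas

/-- Subsets `I`, `J` of `[m]` are non-nesting if and only if the associated lattice
paths `p(I)`, `p(J)` are non-crossing, i.e. one path lies weakly to the northwest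
of the other along their entire length. -/
theorem nonNesting_iff_paths_nonCrossing (m : ℕ) (I J : Finset ℕ)
    (hI : I ⊆ Finset.Icc 1 m) (hJ : J ⊆ Finset.Icc 1 m) :
    SetsNonNesting I J ↔ PathsNonCrossing I J := by
  rw [SetsNonNesting]
  split_ifs with h
  · exact main_half I J h
  · rw [main_half J I (le_of_not_ge h), PathsNonCrossing, PathsNonCrossing]
    exact or_comm
end

section
/- If P is a collection of pairwise non-kissing lattice paths contained in a partial staircase L, then |P̄| ≤ N(L) + 1, where P̄ is the set of distinct paths in P and N(L) is the number of critical nodes of L (nodes with both a north and an east outgoing edge in L). -/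
open Finset

-- auxiliary lemmas

lemma nk_succ (I : Finset ℕ) (k : ℕ) :
    northCount I (k+1) = northCount I k + (if k+1 ∈ I then 1 else 0) := by
  unfold northCount
  split_ifs with h
  · rw [show I.filter (fun i => i ≤ k+1) = insert (k+1) (I.filter (fun i => i ≤ k)) by
      ext x; simp only [Finset.mem_filter, Finset.mem_insert]
      constructor
      · rintro ⟨hx, hle⟩
        rcases Nat.lt_or_ge x (k+1) with h'|h'
        · exact Or.inr ⟨hx, by omega⟩
        · exact Or.inl (by omega)
      · rintro (rfl|⟨hx,hle⟩); exact ⟨h, le_rfl⟩; exact ⟨hx, by omega⟩]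
    rw [Finset.card_insert_of_notMem (by simp)]
  · rw [show I.filter (fun i => i ≤ k+1) = I.filter (fun i => i ≤ k) by
      ext x; simp only [Finset.mem_filter]
      constructor
      · rintro ⟨hx, hle⟩
        refine ⟨hx, ?_⟩
        by_contra hc
        have : x = k+1 := by omega
        exact h (this ▸ hx)
      · rintro ⟨hx, hle⟩; exact ⟨hx, by omega⟩]
    simp

lemma nk_zero {I : Finset ℕ} (h : 0 ∉ I) : northCount I 0 = 0 := by
  unfold northCount
  rw [Finset.card_eq_zero]
  ext x; simp only [Finset.mem_filter, Finset.notMem_empty, iff_false]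
  rintro ⟨hx, hle⟩
  interval_cases x
  exact h hx

lemma nk_le {I : Finset ℕ} (h : 0 ∉ I) (k : ℕ) : northCount I k ≤ k := by
  induction k with
  | zero => simp [nk_zero h]
  | succ n ih => rw [nk_succ]; split_ifs <;> omega

lemma nk_filter {I : Finset ℕ} {k j : ℕ} (hj : j ≤ k) :
    northCount (I.filter (fun i => i ≤ k)) j = northCount I j := by
  unfold northCount
  rw [Finset.filter_filter]
  congr 1
  ext x
  simp only [Finset.mem_filter]
  constructor
  · rintro ⟨hx, _, h2⟩; exact ⟨hx, h2⟩
  · rintro ⟨hx, h2⟩; exact ⟨hx, by omega, h2⟩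

lemma nk_mem_iff {S : Finset ℕ} (j : ℕ) :
    (j+1 ∈ S) ↔ northCount S (j+1) = northCount S j + 1 := by
  rw [nk_succ]; split_ifs with h <;> simp [h]

lemma nk_ext {k : ℕ} {S S' : Finset ℕ} (hS : S ⊆ Finset.Icc 1 k) (hS' : S' ⊆ Finset.Icc 1 k)
    (h : ∀ j ≤ k, northCount S j = northCount S' j) : S = S' := by
  ext x
  by_cases hx : 1 ≤ x ∧ x ≤ k
  · obtain ⟨j, rfl⟩ : ∃ j, x = j + 1 := ⟨x-1, by omega⟩
    rw [nk_mem_iff, nk_mem_iff, h _ (by omega), h _ (by omega)]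
  · have h1 : x ∉ Finset.Icc 1 k := by simp only [Finset.mem_Icc]; omega
    constructor <;> intro hm
    · exact absurd (hS hm) h1
    · exact absurd (hS' hm) h1

lemma erase_filter (I : Finset ℕ) (k : ℕ) :
    (I.filter (fun i => i ≤ k+1)).erase (k+1) = I.filter (fun i => i ≤ k) := by
  ext x
  simp only [Finset.mem_erase, Finset.mem_filter]
  constructor
  · rintro ⟨h1, h2, h3⟩; exact ⟨h2, by omega⟩
  · rintro ⟨h1, h2⟩; exact ⟨by omega, h1, by omega⟩

open Classical in
noncomputable def branchSet (P : Finset (Finset ℕ)) (k : ℕ) : Finset (Finset ℕ) :=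
  (P.image (fun I => I.filter (fun i => i ≤ k))).filter
    (fun S => (∃ I ∈ P, I.filter (fun i => i ≤ k) = S ∧ k+1 ∈ I) ∧
              (∃ J ∈ P, J.filter (fun i => i ≤ k) = S ∧ k+1 ∉ J))

lemma image_card_step (P : Finset (Finset ℕ)) (k : ℕ) :
    (P.image (fun I => I.filter (fun i => i ≤ k+1))).card ≤
    (P.image (fun I => I.filter (fun i => i ≤ k))).card + (branchSet P k).card := by
  classical
  rw [← Finset.card_disjSum]
  apply Finset.card_le_card_of_injOn
    (fun S => if k+1 ∈ S ∧ S.erase (k+1) ∈ branchSet P k then Sum.inr (S.erase (k+1))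
              else Sum.inl (S.erase (k+1)))
  · intro S hS
    obtain ⟨I, hI, rfl⟩ := Finset.mem_image.mp hS
    simp only [Finset.mem_coe]
    split_ifs with hc
    · exact Finset.inr_mem_disjSum.mpr hc.2
    · refine Finset.inl_mem_disjSum.mpr ?_
      rw [erase_filter]
      exact Finset.mem_image_of_mem _ hI
  · intro S hS S' hS' heq
    obtain ⟨I, hI, rfl⟩ := Finset.mem_image.mp hS
    obtain ⟨J, hJ, rfl⟩ := Finset.mem_image.mp hS'
    set S := I.filter (fun i => i ≤ k+1) with hSdef
    set S' := J.filter (fun i => i ≤ k+1) with hS'def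
    simp only at heq
    have key : ∀ {T T' : Finset ℕ} {X Y : Finset ℕ}, X ∈ P → Y ∈ P →
        T = X.filter (fun i => i ≤ k+1) → T' = Y.filter (fun i => i ≤ k+1) →
        T.erase (k+1) = T'.erase (k+1) → k+1 ∈ T → k+1 ∉ T' →
        T.erase (k+1) ∈ branchSet P k := by
      intro T T' X Y hX hY hT hT' hE hmem hmem'
      rw [hT, erase_filter]
      refine Finset.mem_filter.mpr ⟨Finset.mem_image_of_mem _ hX, ⟨X, hX, rfl, ?_⟩, ⟨Y, hY, ?_, ?_⟩⟩
      · have := hmem; rw [hT, Finset.mem_filter] at this; exact this.1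
      · rw [← erase_filter Y k, ← hT', ← hE, hT, erase_filter]
      · intro hk1Y
        exact hmem' (by rw [hT', Finset.mem_filter]; exact ⟨hk1Y, le_rfl⟩)
    by_cases c1 : k+1 ∈ S ∧ S.erase (k+1) ∈ branchSet P k <;>
    by_cases c2 : k+1 ∈ S' ∧ S'.erase (k+1) ∈ branchSet P k
    · rw [if_pos c1, if_pos c2] at heq
      have hE := Sum.inr.inj heq
      rw [← Finset.insert_erase c1.1, ← Finset.insert_erase c2.1, hE]
    · rw [if_pos c1, if_neg c2] at heq; exact absurd heq (by simp)
    · rw [if_neg c1, if_pos c2] at heq; exact absurd heq (by simp)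
    · rw [if_neg c1, if_neg c2] at heq
      have hE := Sum.inl.inj heq
      by_cases m1 : k+1 ∈ S <;> by_cases m2 : k+1 ∈ S'
      · rw [← Finset.insert_erase m1, ← Finset.insert_erase m2, hE]
      · exact absurd ⟨m1, key hI hJ hSdef hS'def hE m1 m2⟩ c1
      · exact absurd ⟨m2, key hJ hI hS'def hSdef hE.symm m2 m1⟩ c2
      · rw [← Finset.erase_eq_of_notMem m1, ← Finset.erase_eq_of_notMem m2, hE]

lemma image_card_le (P : Finset (Finset ℕ)) (h0 : ∀ I ∈ P, 0 ∉ I) (k : ℕ) :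
    (P.image (fun I => I.filter (fun i => i ≤ k))).card ≤
      1 + ∑ j ∈ Finset.range k, (branchSet P j).card := by
  induction k with
  | zero =>
    simp only [Finset.range_zero, Finset.sum_empty]
    have : P.image (fun I => I.filter (fun i => i ≤ 0)) ⊆ {∅} := by
      intro S hS
      obtain ⟨I, hI, rfl⟩ := Finset.mem_image.mp hS
      simp only [Finset.mem_singleton]
      rw [Finset.filter_eq_empty_iff]
      intro x hx hle
      have : x = 0 := by omega
      exact h0 I hI (this ▸ hx)
    calc _ ≤ ({∅} : Finset (Finset ℕ)).card := Finset.card_le_card this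
    _ = 1 := rfl
  | succ n ih =>
    calc _ ≤ _ + (branchSet P n).card := image_card_step P n
    _ ≤ 1 + ∑ j ∈ Finset.range n, (branchSet P j).card + (branchSet P n).card := by omega
    _ = _ := by rw [Finset.sum_range_succ]; omega

lemma pcp_symm {m : ℕ} {I J : Finset ℕ} {k₁ k₂ : ℕ} (h : ProperCommonPart m I J k₁ k₂) :
    ProperCommonPart m J I k₁ k₂ :=
  ⟨h.1, h.2.1, h.2.2.1, fun k h1 h2 => (h.2.2.2.1 k h1 h2).symm,
   Ne.symm h.2.2.2.2.1, Ne.symm h.2.2.2.2.2⟩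

lemma branch_sum_le (m : ℕ) (A : Finset ℕ) (P : Finset (Finset ℕ))
    (hP : ∀ I ∈ P, I ⊆ Finset.Icc 1 m ∧ PathInL m A I)
    (hnk : ∀ I ∈ P, ∀ J ∈ P, PathsNonKissing m I J) :
    ∑ j ∈ Finset.range m, (branchSet P j).card ≤ numCritical m A := by
  classical
  rw [← Finset.card_sigma]
  unfold numCritical
  apply Finset.card_le_card_of_injOn (fun p => (p.1 - p.2.card, p.2.card))
  · rintro ⟨k, S⟩ hp
    simp only [Finset.mem_coe, Finset.mem_sigma, Finset.mem_range] at hp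
    obtain ⟨hkm, hSb⟩ := hp
    obtain ⟨himg, ⟨I, hI, hIS, hIk⟩, ⟨J, hJ, hJS, hJk⟩⟩ := Finset.mem_filter.mp hSb
    have h0I : (0:ℕ) ∉ I := fun h => by simpa using (hP I hI).1 h
    have h0J : (0:ℕ) ∉ J := fun h => by simpa using (hP J hJ).1 h
    have hyI : northCount I k = S.card := by rw [northCount, hIS]
    have hyJ : northCount J k = S.card := by rw [northCount, hJS]
    have hyk : S.card ≤ k := hyI ▸ nk_le h0I k
    have hIk1 : northCount I (k+1) = S.card + 1 := by rw [nk_succ, hyI, if_pos hIk]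
    have hJk1 : northCount J (k+1) = S.card := by rw [nk_succ, hyJ, if_neg hJk]; omega
    have hLI := (hP I hI).2 (k+1) (by omega)
    have hLJ := (hP J hJ).2 (k+1) (by omega)
    rw [hIk1] at hLI
    rw [hJk1] at hLJ
    refine Finset.mem_filter.mpr ⟨Finset.mem_product.mpr ⟨?_, ?_⟩, ?_, ?_⟩
    · simp only [Finset.mem_range]; omega
    · simp only [Finset.mem_range]; omega
    · show InL m A (k - S.card + 1) S.card
      have : k + 1 - S.card = k - S.card + 1 := by omega
      rwa [this] at hLJ
    · show InL m A (k - S.card) (S.card + 1)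
      have : k + 1 - (S.card + 1) = k - S.card := by omega
      rwa [this] at hLI
  · rintro ⟨k, S⟩ hp ⟨k', S'⟩ hq heq
    simp only [Finset.mem_coe, Finset.mem_sigma, Finset.mem_range] at hp hq
    obtain ⟨hkm, hSb⟩ := hp
    obtain ⟨hkm', hS'b⟩ := hq
    obtain ⟨himg, ⟨I, hI, hIS, hIk⟩, ⟨J, hJ, hJS, hJk⟩⟩ := Finset.mem_filter.mp hSb
    obtain ⟨himg', ⟨I', hI', hI'S, hI'k⟩, ⟨J', hJ', hJ'S, hJ'k⟩⟩ := Finset.mem_filter.mp hS'b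
    simp only [Prod.mk.injEq] at heq
    obtain ⟨hx, hy⟩ := heq
    have h0I : (0:ℕ) ∉ I := fun h => by simpa using (hP I hI).1 h
    have h0I' : (0:ℕ) ∉ I' := fun h => by simpa using (hP I' hI').1 h
    have hyI : northCount I k = S.card := by rw [northCount, hIS]
    have hyI' : northCount I' k' = S'.card := by rw [northCount, hI'S]
    have hyk : S.card ≤ k := hyI ▸ nk_le h0I k
    have hyk' : S'.card ≤ k' := hyI' ▸ nk_le h0I' k'
    have hkk : k = k' := by omega
    subst hkk
    suffices hSS : S = S' by rw [hSS]
    by_contra hSne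
    -- set up maximal disagreement index a
    have hSsub : S ⊆ Finset.Icc 1 k := by
      intro x hx'
      rw [← hIS, Finset.mem_filter] at hx'
      have := Finset.mem_Icc.mp ((hP I hI).1 hx'.1)
      exact Finset.mem_Icc.mpr ⟨this.1, hx'.2⟩
    have hS'sub : S' ⊆ Finset.Icc 1 k := by
      intro x hx'
      rw [← hI'S, Finset.mem_filter] at hx'
      have := Finset.mem_Icc.mp ((hP I' hI').1 hx'.1)
      exact Finset.mem_Icc.mpr ⟨this.1, hx'.2⟩
    have hSk : northCount S k = S.card := by
      rw [northCount, Finset.filter_true_of_mem (fun x hx' => (Finset.mem_Icc.mp (hSsub hx')).2)]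
    have hS'k : northCount S' k = S'.card := by
      rw [northCount, Finset.filter_true_of_mem (fun x hx' => (Finset.mem_Icc.mp (hS'sub hx')).2)]
    have hDne : (Finset.filter (fun j => northCount S j ≠ northCount S' j)
        (Finset.range k)).Nonempty := by
      rw [Finset.filter_nonempty_iff]
      by_contra hc
      push_neg at hc
      apply hSne
      apply nk_ext hSsub hS'sub
      intro j hj
      rcases eq_or_lt_of_le hj with rfl|hlt
      · rw [hSk, hS'k, hy]
      · exact hc j (Finset.mem_range.mpr hlt)
    set a := Finset.max' _ hDne with haDef
    have haD := Finset.max'_mem _ hDne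
    rw [Finset.mem_filter, Finset.mem_range] at haD
    obtain ⟨hak, hane⟩ := haD
    have hmax : ∀ j, a < j → j ≤ k → northCount S j = northCount S' j := by
      intro j hj1 hj2
      rcases eq_or_lt_of_le hj2 with rfl|hlt
      · rw [hSk, hS'k, hy]
      · by_contra hne'
        have hjD : j ∈ Finset.filter (fun j => northCount S j ≠ northCount S' j)
            (Finset.range k) := Finset.mem_filter.mpr ⟨Finset.mem_range.mpr hlt, hne'⟩
        exact absurd (Finset.le_max' _ j hjD) (by omega)
    -- translate northCounts of paths to those of S, S'
    have hIS' : ∀ j ≤ k, northCount I j = northCount S j := by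
      intro j hj; rw [← hIS, nk_filter hj]
    have hJS' : ∀ j ≤ k, northCount J j = northCount S j := by
      intro j hj; rw [← hJS, nk_filter hj]
    have hI'S' : ∀ j ≤ k, northCount I' j = northCount S' j := by
      intro j hj; rw [← hI'S, nk_filter hj]
    have hJ'S' : ∀ j ≤ k, northCount J' j = northCount S' j := by
      intro j hj; rw [← hJ'S, nk_filter hj]
    have hIk1 : northCount I (k+1) = S.card + 1 := by
      rw [nk_succ, if_pos hIk, hIS' k le_rfl, hSk]
    have hJk1 : northCount J (k+1) = S.card := by
      rw [nk_succ, if_neg hJk, hJS' k le_rfl, hSk]; omega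
    have hI'k1 : northCount I' (k+1) = S.card + 1 := by
      rw [nk_succ, if_pos hI'k, hI'S' k le_rfl, hS'k, hy]
    have hJ'k1 : northCount J' (k+1) = S.card := by
      rw [nk_succ, if_neg hJ'k, hJ'S' k le_rfl, hS'k, hy]; omega
    -- proper common parts
    have pcp1 : ProperCommonPart m I J' (a+1) k := by
      refine ⟨by omega, by omega, by omega, ?_, ?_, ?_⟩
      · intro j hj1 hj2
        rw [hIS' j (by omega), hJ'S' j (by omega)]
        exact hmax j (by omega) hj2
      · simp only [Nat.add_sub_cancel]
        rw [hIS' a (by omega), hJ'S' a (by omega)]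
        exact hane
      · rw [hIk1, hJ'k1]; omega
    have pcp2 : ProperCommonPart m I' J (a+1) k := by
      refine ⟨by omega, by omega, by omega, ?_, ?_, ?_⟩
      · intro j hj1 hj2
        rw [hI'S' j (by omega), hJS' j (by omega)]
        exact (hmax j (by omega) hj2).symm
      · simp only [Nat.add_sub_cancel]
        rw [hI'S' a (by omega), hJS' a (by omega)]
        exact Ne.symm hane
      · rw [hI'k1, hJk1]; omega
    have hain : a+1 ∈ I := (hnk I hI J' hJ' (a+1) k pcp1).mpr hIk
    have ha'in : a+1 ∈ I' := (hnk I' hI' J hJ (a+1) k pcp2).mpr hI'k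
    have haJ' : a+1 ∉ J' := fun h =>
      hJ'k ((hnk J' hJ' I hI (a+1) k (pcp_symm pcp1)).mp h)
    -- final arithmetic contradiction
    have e1 : northCount I (a+1) = northCount S a + 1 := by
      rw [nk_succ, if_pos hain, hIS' a (by omega)]
    have e2 : northCount J' (a+1) = northCount I (a+1) :=
      (pcp1.2.2.2.1 (a+1) le_rfl (by omega)).symm
    have e3 : northCount J' (a+1) = northCount J' a := by
      rw [nk_succ, if_neg haJ']; omega
    have e4 : northCount J' a = northCount S' a := hJ'S' a (by omega)
    have e5 : northCount I' (a+1) = northCount S' a + 1 := by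
      rw [nk_succ, if_pos ha'in, hI'S' a (by omega)]
    have e6 : northCount I' (a+1) = northCount S' (a+1) := hI'S' (a+1) (by omega)
    have e7 : northCount S' (a+1) = northCount S (a+1) := (hmax (a+1) (by omega) (by omega)).symm
    have e8 : northCount I (a+1) = northCount S (a+1) := hIS' (a+1) (by omega)
    omega


/-- If `P` is a collection of pairwise non-kissing lattice paths contained in a partial
staircase `L`, then the number of distinct paths in `P` is at most `N(L) + 1`, where
`N(L)` is the number of critical nodes of `L`. -/
theorem nonKissing_card_le (m : ℕ) (A : Finset ℕ) (hA : A ⊆ Finset.range (m+1))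
    (P : Finset (Finset ℕ))
    (hP : ∀ I ∈ P, I ⊆ Finset.Icc 1 m ∧ PathInL m A I)
    (hnk : ∀ I ∈ P, ∀ J ∈ P, PathsNonKissing m I J) :
    P.card ≤ numCritical m A + 1 := by
    classical
  have h0 : ∀ I ∈ P, (0:ℕ) ∉ I := fun I hI h => by simpa using (hP I hI).1 h
  have h1 : P.image (fun I => I.filter (fun i => i ≤ m)) = P := by
    ext S
    simp only [Finset.mem_image]
    constructor
    · rintro ⟨I, hI, rfl⟩
      rwa [Finset.filter_true_of_mem
        (fun x hx => (Finset.mem_Icc.mp ((hP I hI).1 hx)).2)]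
    · intro hS
      exact ⟨S, hS, Finset.filter_true_of_mem
        (fun x hx => (Finset.mem_Icc.mp ((hP S hS).1 hx)).2)⟩
  have h2 := image_card_le P h0 m
  rw [h1] at h2
  have h3 := branch_sum_le m A P hP hnk
  omega
end
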